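/- arXiv:2512.15975 — 7 statements merged into one kernel-verified Lean document; each statement's English description precedes it below -/
import Mathlib

section
/- Let (X,d) be a uniformly discrete metric space and let f : X → X and a constant c with 0 ≤ c < 1/2 satisfy d(fx,fy) ≤ c · max{d(x,y), d(x,fx), d(y,fy), d(x,fy), d(y,fx)} for all x,y ∈ X. Then f has a unique fixed point in X. -/
theorem quasi_contraction_fixed_point
    {X : Type*} [MetricSpace X] [Nonempty X]
    (hud : ∃ ε > (0 : ℝ), ∀ x y : X, dist x y < ε → x = y)
    (f : X → X) (c : ℝ) (hc0 : 0 ≤ c) (hc : c < 1 / 2)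
    (h : ∀ x y : X, dist (f x) (f y) ≤
      c * max (dist x y) (max (dist x (f x)) (max (dist y (f y))
        (max (dist x (f y)) (dist y (f x)))))) :
    ∃! x : X, f x = x := by
  obtain ⟨ε, hε, hdisc⟩ := hud
  set lam := c / (1 - c) with hlam
  have h1c : (0:ℝ) < 1 - c := by linarith
  have hlam0 : 0 ≤ lam := div_nonneg hc0 h1c.le
  have hlam1 : lam < 1 := (div_lt_one h1c).2 (by linarith)
  -- key step estimate
  have step : ∀ y : X, dist (f y) (f (f y)) ≤ lam * dist y (f y) := by
    intro y
    set a := dist y (f y) with ha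
    set b := dist (f y) (f (f y)) with hb
    have htri : dist y (f (f y)) ≤ a + b := dist_triangle _ _ _
    have hmax : max a (max a (max b (max (dist y (f (f y))) (dist (f y) (f y)))))
        ≤ a + b := by
      have hb0 : 0 ≤ b := dist_nonneg
      have ha0 : 0 ≤ a := dist_nonneg
      simp only [max_le_iff]
      refine ⟨by linarith, by linarith, by linarith, htri, ?_⟩
      simp [dist_self]; positivity
    have := h y (f y)
    have hb' : b ≤ c * (a + b) := le_trans this (by
      apply mul_le_mul_of_nonneg_left hmax hc0)
    have : (1 - c) * b ≤ c * a := by ring_nf; ring_nf at hb'; linarith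
    rw [hlam, div_mul_eq_mul_div, le_div_iff₀ h1c]
    linarith [this]
  -- iterate estimate
  obtain ⟨x₀⟩ : Nonempty X := inferInstance
  have iter : ∀ n : ℕ, dist (f^[n] x₀) (f^[n+1] x₀) ≤ lam ^ n * dist x₀ (f x₀) := by
    intro n
    induction n with
    | zero => simp
    | succ n ih =>
      have : f^[n+1] x₀ = f (f^[n] x₀) := Function.iterate_succ_apply' f n x₀
      have h2 : f^[n+2] x₀ = f (f (f^[n] x₀)) := by
        rw [Function.iterate_succ_apply' f (n+1) x₀, this]
      rw [this, h2]
      calc dist (f (f^[n] x₀)) (f (f (f^[n] x₀))) ≤ lam * dist (f^[n] x₀) (f (f^[n] x₀)) :=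
            step _
        _ ≤ lam * (lam ^ n * dist x₀ (f x₀)) := by
            apply mul_le_mul_of_nonneg_left _ hlam0
            rw [← this]; exact ih
        _ = lam ^ (n+1) * dist x₀ (f x₀) := by ring
  -- find n with lam^n * d < ε
  have htend : Filter.Tendsto (fun n : ℕ => lam ^ n * dist x₀ (f x₀)) Filter.atTop (nhds 0) := by
    have := tendsto_pow_atTop_nhds_zero_of_lt_one hlam0 hlam1
    simpa using this.mul_const (dist x₀ (f x₀))
  obtain ⟨n, hn⟩ := (htend.eventually (gt_mem_nhds hε)).exists
  have hfix : f (f^[n] x₀) = f^[n] x₀ := by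
    have : dist (f^[n] x₀) (f^[n+1] x₀) < ε := lt_of_le_of_lt (iter n) hn
    have := hdisc _ _ this
    rw [Function.iterate_succ_apply' f n x₀] at this
    exact this.symm
  refine ⟨f^[n] x₀, hfix, ?_⟩
  intro y hy
  -- uniqueness
  have key : ∀ u v : X, f u = u → f v = v → u = v := by
    intro u v hu hv
    have := h u v
    rw [hu, hv] at this
    simp [dist_self, dist_comm v u] at this
    have hd : dist u v ≤ c * dist u v := by
      simpa [max_eq_right dist_nonneg] using this
    have : dist u v ≤ 0 := by nlinarith [dist_nonneg (x := u) (y := v)]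
    exact dist_le_zero.mp this
  exact key y _ hy hfix
end

section
/- Let (X,d) be a uniformly discrete nonempty metric space and f : X → X satisfying, for nonnegative constants a, b with a + b < 1/2, the inequality d(fx,fy) ≤ a·[d(x,fx) + d(y,fy)] + b·[d(x,fy) + d(y,fx)] for all x,y ∈ X. Then f has a unique fixed point in X. -/
theorem kannan_chatterjea_fixed_point
    {X : Type*} [MetricSpace X] [Nonempty X]
    (hud : ∃ ε > (0 : ℝ), ∀ x y : X, dist x y < ε → x = y)
    (f : X → X) (a b : ℝ) (ha : 0 ≤ a) (hb : 0 ≤ b) (hab : a + b < 1 / 2)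
    (h : ∀ x y : X, dist (f x) (f y) ≤
      a * (dist x (f x) + dist y (f y)) + b * (dist x (f y) + dist y (f x))) :
    ∃! x : X, f x = x := by
  obtain ⟨ε, hε, hud⟩ := hud
  set k : ℝ := (a + b) / (1 - a - b) with hk
  have hden : (0:ℝ) < 1 - a - b := by linarith
  have hk0 : 0 ≤ k := div_nonneg (by linarith) hden.le
  have hk1 : k < 1 := by
    rw [div_lt_one hden]; linarith
  have step : ∀ x : X, dist (f x) (f (f x)) ≤ k * dist x (f x) := by
    intro x
    have h1 := h x (f x)
    have h2 : dist x (f (f x)) ≤ dist x (f x) + dist (f x) (f (f x)) :=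
      dist_triangle _ _ _
    have h3 : dist (f x) (f x) = 0 := dist_self _
    rw [hk, div_mul_eq_mul_div, le_div_iff₀ hden]
    nlinarith [dist_nonneg (x := x) (y := f x), dist_nonneg (x := f x) (y := f (f x))]
  obtain ⟨x₀⟩ := ‹Nonempty X›
  have iter : ∀ n : ℕ, dist (f^[n] x₀) (f^[n+1] x₀) ≤ k ^ n * dist x₀ (f x₀) := by
    intro n
    induction n with
    | zero => simp
    | succ n ih =>
      have := step (f^[n] x₀)
      rw [← Function.iterate_succ_apply' f n x₀] at this
      calc dist (f^[n+1] x₀) (f^[n+2] x₀)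
          ≤ k * dist (f^[n] x₀) (f^[n+1] x₀) := by
            simpa [Function.iterate_succ_apply'] using this
        _ ≤ k * (k ^ n * dist x₀ (f x₀)) := by
            exact mul_le_mul_of_nonneg_left ih hk0
        _ = k ^ (n+1) * dist x₀ (f x₀) := by ring
  have htend : Filter.Tendsto (fun n => k ^ n * dist x₀ (f x₀)) Filter.atTop (nhds 0) := by
    have := (tendsto_pow_atTop_nhds_zero_of_lt_one hk0 hk1).mul_const (dist x₀ (f x₀))
    simpa using this
  obtain ⟨n, hn⟩ := (htend.eventually (gt_mem_nhds hε)).exists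
  have hfix : f (f^[n] x₀) = f^[n] x₀ := by
    have : dist (f^[n] x₀) (f^[n+1] x₀) < ε := lt_of_le_of_lt (iter n) hn
    have := hud _ _ this
    rw [Function.iterate_succ_apply' f n x₀] at this
    exact this.symm
  refine ⟨f^[n] x₀, hfix, ?_⟩
  intro y hy
  have h1 := h y (f^[n] x₀)
  rw [hy, hfix, dist_self, dist_self] at h1
  have h2 : dist (f^[n] x₀) y = dist y (f^[n] x₀) := dist_comm _ _
  have : dist y (f^[n] x₀) ≤ 0 := by nlinarith [dist_nonneg (x := y) (y := f^[n] x₀)]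
  have := le_antisymm this dist_nonneg
  exact dist_eq_zero.mp this
end

section
/- Let (X,d) be a uniformly discrete nonempty metric space. Let f : X → X be such that for some nonnegative constants a, b, c with b + c < 1, for all x,y ∈ X with x ≠ y, d(fx,fy) + a·d(y,fx) ≤ b·(d(x,fx)·d(x,fx))/d(x,y) + c·d(x,y). Then f has a unique fixed point. -/
theorem rational_type_contraction_fixed_point
    {X : Type*} [MetricSpace X] [Nonempty X]
    (hud : ∃ ε > (0 : ℝ), ∀ x y : X, dist x y < ε → x = y)
    (f : X → X) (a b c : ℝ) (ha : 0 ≤ a) (hb : 0 ≤ b) (hc : 0 ≤ c)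
    (hbc : b + c < 1)
    (h : ∀ x y : X, x ≠ y →
      dist (f x) (f y) + a * dist y (f x) ≤
        b * (dist x (f x) * dist x (f x)) / dist x y + c * dist x y) :
    ∃! x : X, f x = x := by
  obtain ⟨ε, hε, hud⟩ := hud
  set k := b + c with hkdef
  have hk0 : 0 ≤ k := by positivity
  have key : ∀ x : X, dist (f x) (f (f x)) ≤ k * dist x (f x) := by
    intro x
    by_cases hx : x = f x
    · have : f (f x) = f x := (congrArg f hx).symm
      rw [this, dist_self]
      exact mul_nonneg hk0 dist_nonneg
    · have hd : dist x (f x) ≠ 0 := by simpa [dist_eq_zero] using hx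
      have h1 := h x (f x) hx
      rw [dist_self] at h1
      have h2 : b * (dist x (f x) * dist x (f x)) / dist x (f x)
          = b * dist x (f x) := by field_simp
      rw [h2] at h1
      rw [hkdef]; linarith
  obtain ⟨x0⟩ := ‹Nonempty X›
  set D := dist x0 (f x0) with hD
  have hiter : ∀ n : ℕ, dist (f^[n] x0) (f^[n+1] x0) ≤ k ^ n * D := by
    intro n
    induction n with
    | zero => simp [hD]
    | succ n ih =>
      have e1 : f^[n+1] x0 = f (f^[n] x0) := Function.iterate_succ_apply' f n x0
      have e2 : f^[n+2] x0 = f (f^[n+1] x0) := Function.iterate_succ_apply' f (n+1) x0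
      calc dist (f^[n+1] x0) (f^[n+2] x0)
          = dist (f (f^[n] x0)) (f (f (f^[n] x0))) := by rw [e1, e2, e1]
        _ ≤ k * dist (f^[n] x0) (f (f^[n] x0)) := key _
        _ = k * dist (f^[n] x0) (f^[n+1] x0) := by rw [e1]
        _ ≤ k * (k ^ n * D) := by
            exact mul_le_mul_of_nonneg_left ih hk0
        _ = k ^ (n+1) * D := by ring
  have htend : Filter.Tendsto (fun n : ℕ => k ^ n * D) Filter.atTop (nhds 0) := by
    have := tendsto_pow_atTop_nhds_zero_of_lt_one hk0 hbc
    simpa using this.mul_const D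
  have : ∀ᶠ n in Filter.atTop, k ^ n * D < ε := by
    have := htend.eventually (eventually_lt_nhds hε)  -- maybe wrong name
    simpa using this
  obtain ⟨n, hn⟩ := this.exists
  have hfix : f (f^[n] x0) = f^[n] x0 := by
    have hlt : dist (f^[n] x0) (f^[n+1] x0) < ε := lt_of_le_of_lt (hiter n) hn
    have := hud _ _ hlt
    rw [Function.iterate_succ_apply' f n x0] at this
    exact this.symm
  refine ⟨f^[n] x0, hfix, ?_⟩
  intro y hy
  by_contra hne
  have h1 := h y (f^[n] x0) hne
  rw [hy, hfix] at h1
  have hd : 0 < dist y (f^[n] x0) := by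
    rwa [dist_pos]
  rw [dist_self] at h1
  have hc1 : c < 1 := by linarith
  have hda : 0 ≤ a * dist (f^[n] x0) y := mul_nonneg ha dist_nonneg
  simp only [mul_zero, zero_div] at h1
  nlinarith
end

section
/- Let X = {0, 1} ⊂ ℤ with d(x,y) = |x − y|, and T : X → X defined by T(x) = 1 − x. Then with k₁ = 0, k₂ = √0.9, k₃ = 0.3, we have k₁² + k₂² + k₃² < 1 and d(Ta,Tb) ≤ k₁²·d(a,b) + k₂²·[d(a,Ta) + d(b,Tb)] + k₃²·√(d(a,b)·min{d(a,Ta), d(b,Tb)}) for all a,b ∈ X, yet T has no fixed point. -/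
theorem counterexample_rational_sqrt_contraction
    (T : ({0, 1} : Set ℤ) → ({0, 1} : Set ℤ))
    (hT : ∀ x, (T x : ℤ) = 1 - (x : ℤ)) :
    (0 : ℝ) ^ 2 + Real.sqrt 0.9 ^ 2 + (0.3 : ℝ) ^ 2 < 1 ∧
    (∀ a b, dist (T a) (T b) ≤
      (0 : ℝ) ^ 2 * dist a b +
      Real.sqrt 0.9 ^ 2 * (dist a (T a) + dist b (T b)) +
      (0.3 : ℝ) ^ 2 * Real.sqrt (dist a b * min (dist a (T a)) (dist b (T b)))) ∧
    (∀ x, T x ≠ x) := by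
  have h9 : Real.sqrt 0.9 ^ 2 = 0.9 := Real.sq_sqrt (by norm_num)
  refine ⟨by rw [h9]; norm_num, ?_, ?_⟩
  · intro a b
    have ha := a.2; have hb := b.2
    simp only [Set.mem_insert_iff, Set.mem_singleton_iff] at ha hb
    have hda : dist a (T a) = 1 := by
      rw [Subtype.dist_eq, Int.dist_eq, hT]
      rcases ha with h | h <;> rw [h] <;> norm_num
    have hdb : dist b (T b) = 1 := by
      rw [Subtype.dist_eq, Int.dist_eq, hT]
      rcases hb with h | h <;> rw [h] <;> norm_num
    have hd : dist (T a) (T b) ≤ 1 := by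
      rw [Subtype.dist_eq, Int.dist_eq, hT, hT]
      rcases ha with h | h <;> rcases hb with h' | h' <;> rw [h, h'] <;> norm_num
    have hd0 : (0:ℝ) ≤ dist a b := dist_nonneg
    rw [h9, hda, hdb]
    nlinarith [Real.sqrt_nonneg (dist a b * min (1:ℝ) 1)]
  · intro x h
    have := hT x
    rw [h] at this
    have hx := x.2
    simp only [Set.mem_insert_iff, Set.mem_singleton_iff] at hx
    omega
end

section
/- The map T : {0,1} → {0,1}, T(x) = 1 − x, satisfies d(Ta,Tb) ≤ 0.9·[d(a,Ta) + d(b,Tb)] + 0.09·√(d(a,b)·min{d(a,Ta), d(b,Tb)}) for all a, b ∈ {0,1} with d(x,y) = |x−y|, and T has no fixed point. -/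
theorem flip_map_satisfies_inequality_no_fixed_point
    (T : ({0, 1} : Set ℤ) → ({0, 1} : Set ℤ))
    (hT : ∀ x, (T x : ℤ) = 1 - (x : ℤ)) :
    (∀ a b, dist (T a) (T b) ≤
      0.9 * (dist a (T a) + dist b (T b)) +
      0.09 * Real.sqrt (dist a b * min (dist a (T a)) (dist b (T b)))) ∧
    (∀ x, T x ≠ x) := by
  constructor
  · intro a b
    have ha : (a : ℤ) = 0 ∨ (a : ℤ) = 1 := a.2
    have hb : (b : ℤ) = 0 ∨ (b : ℤ) = 1 := b.2
    have hda : dist a (T a) = 1 := by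
      rw [Subtype.dist_eq, hT a, Int.dist_eq]
      rcases ha with h | h <;> rw [h] <;> norm_num
    have hdb : dist b (T b) = 1 := by
      rw [Subtype.dist_eq, hT b, Int.dist_eq]
      rcases hb with h | h <;> rw [h] <;> norm_num
    have hd : dist (T a) (T b) = dist a b := by
      rw [Subtype.dist_eq, Subtype.dist_eq, hT a, hT b, Int.dist_eq, Int.dist_eq]
      push_cast
      rw [show ((1:ℝ) - a - (1 - b)) = -((a:ℝ) - b) by ring, abs_neg]
    have hab : dist a b ≤ 1 := by
      rw [Subtype.dist_eq, Int.dist_eq]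
      rcases ha with h | h <;> rcases hb with h' | h' <;> rw [h, h'] <;> norm_num
    have hs : 0 ≤ Real.sqrt (dist a b * min (dist a (T a)) (dist b (T b))) :=
      Real.sqrt_nonneg _
    rw [hd, hda, hdb, min_self]
    nlinarith [Real.sqrt_nonneg (dist a b * (1:ℝ))]
  · intro x hx
    have h := hT x
    rw [hx] at h
    have hx2 : (x : ℤ) = 0 ∨ (x : ℤ) = 1 := x.2
    omega
end

section
/- Let (X,d) be a metric space and f : X → X satisfy, for nonnegative constants a, b with a + b < 1/2, d(fx,fy) ≤ a·[d(x,fx) + d(y,fy)] + b·[d(x,fy) + d(y,fx)] for all x,y. Then for any x₀ ∈ X, the orbit x_{n+1} = f(x_n) satisfies d(x_{n+1}, x_{n+2}) ≤ ((a+b)/(1−(a+b)))·d(x_n, x_{n+1}) for all n. -/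
theorem kannan_chatterjea_orbit_decay
    {X : Type*} [MetricSpace X]
    (f : X → X) (a b : ℝ) (ha : 0 ≤ a) (hb : 0 ≤ b) (hab : a + b < 1 / 2)
    (h : ∀ x y : X, dist (f x) (f y) ≤
      a * (dist x (f x) + dist y (f y)) + b * (dist x (f y) + dist y (f x)))
    (x : ℕ → X) (hx : ∀ n, x (n + 1) = f (x n)) :
    ∀ n, dist (x (n + 1)) (x (n + 2)) ≤
      ((a + b) / (1 - (a + b))) * dist (x n) (x (n + 1)) := by
  intro n
  have h1 := h (x n) (x (n + 1))
  rw [← hx n, ← hx (n + 1)] at h1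
  have htri : dist (x n) (x (n + 2)) ≤ dist (x n) (x (n + 1)) + dist (x (n + 1)) (x (n + 2)) :=
    dist_triangle _ _ _
  have hself : dist (x (n + 1)) (x (n + 1)) = 0 := dist_self _
  have hpos : 0 < 1 - (a + b) := by linarith
  rw [div_mul_eq_mul_div, le_div_iff₀ hpos]
  nlinarith [dist_nonneg (x := x n) (y := x (n + 1)),
    dist_nonneg (x := x (n + 1)) (y := x (n + 2))]
end

section
/- Let (X,d) be a metric space and f : X → X satisfy d(fx,fy) ≤ c·max{d(x,y), d(x,fx), d(y,fy), d(x,fy), d(y,fx)} for all x,y with 0 ≤ c < 1/2. Then for any x₀ ∈ X, the orbit x_{n+1} = f(x_n) satisfies d(x_{n+1}, x_{n+2}) ≤ (c/(1−c))·d(x_n, x_{n+1}) for all n, and hence is a Cauchy sequence. -/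
theorem quasi_contraction_orbit_decay_cauchy
    {X : Type*} [MetricSpace X]
    (f : X → X) (c : ℝ) (hc0 : 0 ≤ c) (hc : c < 1 / 2)
    (h : ∀ x y : X, dist (f x) (f y) ≤
      c * max (dist x y) (max (dist x (f x)) (max (dist y (f y))
        (max (dist x (f y)) (dist y (f x))))))
    (x : ℕ → X) (hx : ∀ n, x (n + 1) = f (x n)) :
    (∀ n, dist (x (n + 1)) (x (n + 2)) ≤
      (c / (1 - c)) * dist (x n) (x (n + 1))) ∧ CauchySeq x := by
  have h1c : (0:ℝ) < 1 - c := by linarith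
  have hr0 : 0 ≤ c / (1 - c) := div_nonneg hc0 h1c.le
  have hr1 : c / (1 - c) < 1 := (div_lt_one h1c).mpr (by linarith)
  have key : ∀ n, dist (x (n + 1)) (x (n + 2)) ≤
      (c / (1 - c)) * dist (x n) (x (n + 1)) := by
    intro n
    have hb := h (x n) (x (n + 1))
    rw [← hx n, ← hx (n + 1), show n + 1 + 1 = n + 2 from rfl] at hb
    have ha0 : 0 ≤ dist (x n) (x (n + 1)) := dist_nonneg
    have hb0 : 0 ≤ dist (x (n + 1)) (x (n + 2)) := dist_nonneg
    have htri : dist (x n) (x (n + 2)) ≤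
        dist (x n) (x (n + 1)) + dist (x (n + 1)) (x (n + 2)) :=
      dist_triangle _ _ _
    rw [dist_self] at hb
    have hmax : max (dist (x n) (x (n + 1))) (max (dist (x n) (x (n + 1)))
        (max (dist (x (n + 1)) (x (n + 2))) (max (dist (x n) (x (n + 2))) 0))) ≤
        dist (x n) (x (n + 1)) + dist (x (n + 1)) (x (n + 2)) := by
      apply max_le (by linarith)
      apply max_le (by linarith)
      apply max_le (by linarith)
      exact max_le htri (by linarith)
    have hbc : dist (x (n + 1)) (x (n + 2)) ≤
        c * (dist (x n) (x (n + 1)) + dist (x (n + 1)) (x (n + 2))) :=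
      hb.trans (mul_le_mul_of_nonneg_left hmax hc0)
    rw [div_mul_eq_mul_div, le_div_iff₀ h1c]
    nlinarith
  refine ⟨key, ?_⟩
  apply cauchySeq_of_le_geometric (c / (1 - c)) (dist (x 0) (x 1)) hr1
  intro n
  induction n with
  | zero => simpa using le_refl (dist (x 0) (x 1))
  | succ n ih =>
    calc dist (x (n + 1)) (x (n + 2)) ≤ (c / (1 - c)) * dist (x n) (x (n + 1)) := key n
    _ ≤ (c / (1 - c)) * (dist (x 0) (x 1) * (c / (1 - c)) ^ n) :=
        mul_le_mul_of_nonneg_left ih hr0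
    _ = dist (x 0) (x 1) * (c / (1 - c)) ^ (n + 1) := by ring
end
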